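/- For every squarefree positive integer n, |g⁻¹(n)| = ∑_{m=0}^{ω(n)} binom(ω(n), m) · m!. -/

import Mathlib

open Finset

def aaux (k : ℕ) : ℕ := ∑ m ∈ Finset.range (k+1), k.choose m * m.factorial

lemma alt_real (n : ℕ) :
    ∑ i ∈ range (n+1), (-1:ℝ)^i * n.choose i = if n = 0 then 1 else 0 := by
  have := Int.alternating_sum_range_choose (n := n)
  calc ∑ i ∈ range (n+1), (-1:ℝ)^i * n.choose i
      = ((∑ m ∈ range (n + 1), ((-1) ^ m * n.choose m : ℤ) : ℤ) : ℝ) := by push_cast; rfl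
    _ = _ := by rw [this]; split_ifs <;> simp

lemma lemA (k : ℕ) :
    ∑ j ∈ range (k+1), (-1:ℝ)^j * (k.choose j) * (aaux j) = (-1)^k * k.factorial := by
  have hext : ∀ j ∈ range (k+1),
      (-1:ℝ)^j * (k.choose j) * (aaux j)
        = ∑ m ∈ range (k+1), (-1:ℝ)^j * (k.choose j) * ((j.choose m * m.factorial : ℕ) : ℝ) := by
    intro j hj
    rw [Finset.mem_range, Nat.lt_succ_iff] at hj
    rw [← Finset.mul_sum]
    congr 1
    unfold aaux
    push_cast
    refine Finset.sum_subset (Finset.range_subset_range.2 ?_) ?_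
    · omega
    · intro m _ hm
      rw [Finset.mem_range, not_lt] at hm
      rw [Nat.choose_eq_zero_of_lt (by omega : j < m)]
      simp
  rw [Finset.sum_congr rfl hext, Finset.sum_comm]
  have hinner : ∀ m ∈ range (k+1),
      (∑ j ∈ range (k+1), (-1:ℝ)^j * (k.choose j) * ((j.choose m * m.factorial : ℕ) : ℝ))
        = if m = k then (-1:ℝ)^k * k.factorial else 0 := by
    intro m hm
    rw [Finset.mem_range, Nat.lt_succ_iff] at hm
    have h1 : ∑ j ∈ range (k+1), (-1:ℝ)^j * (k.choose j) * ((j.choose m * m.factorial : ℕ) : ℝ)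
        = ∑ j ∈ Finset.Ico m (k+1), (-1:ℝ)^j * (k.choose j) * ((j.choose m * m.factorial : ℕ) : ℝ) := by
      rw [Finset.range_eq_Ico]
      refine (Finset.sum_subset (Finset.Ico_subset_Ico (Nat.zero_le _) le_rfl) ?_).symm
      intro j hj hj2
      rw [Finset.mem_Ico] at hj hj2
      rw [Nat.choose_eq_zero_of_lt (by omega : j < m)]
      simp
    rw [h1, Finset.sum_Ico_eq_sum_range]
    have h2 : ∀ i ∈ range (k+1-m),
        (-1:ℝ)^(m+i) * (k.choose (m+i)) * (((m+i).choose m * m.factorial : ℕ) : ℝ)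
          = ((-1:ℝ)^m * (k.choose m) * m.factorial) * ((-1:ℝ)^i * ((k-m).choose i)) := by
      intro i hi
      rw [Finset.mem_range] at hi
      have hik : m + i ≤ k := by omega
      have hc : k.choose (m+i) * (m+i).choose m = k.choose m * (k-m).choose i := by
        have := Nat.choose_mul (n := k) (Nat.le_add_right m i)
        simpa using this
      have : ((k.choose (m+i) : ℝ)) * ((m+i).choose m) = (k.choose m : ℝ) * ((k-m).choose i) := by
        exact_mod_cast congrArg (Nat.cast : ℕ → ℝ) hc
      push_cast
      rw [pow_add]
      linear_combination ((-1:ℝ)^m * (-1)^i * (m.factorial : ℝ)) * this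
    rw [Finset.sum_congr rfl h2, ← Finset.mul_sum]
    have hrange : k + 1 - m = (k - m) + 1 := by omega
    rw [hrange, alt_real]
    by_cases hmk : m = k
    · subst hmk
      simp
    · rw [if_neg (by omega), if_neg hmk, mul_zero]
  rw [Finset.sum_congr rfl hinner, Finset.sum_ite_eq' (range (k+1)) k]
  rw [if_pos (Finset.self_mem_range_succ k)]

lemma choose_absorb (k j : ℕ) (hk : 1 ≤ k) :
    k.choose j * (k - j) = k * (k-1).choose j := by
  obtain ⟨k', rfl⟩ : ∃ k', k = k' + 1 := ⟨k - 1, by omega⟩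
  have h1 := Nat.choose_succ_right_eq (k'+1) j
  have h2 := Nat.add_one_mul_choose_eq k' j
  simp only [Nat.succ_eq_add_one, Nat.add_sub_cancel] at h1 h2 ⊢
  omega

lemma lemB (k : ℕ) (hk : 1 ≤ k) :
    ∑ j ∈ range (k+1), (-1:ℝ)^j * (k.choose j) * (((k-j : ℕ) : ℝ) + 1) * (aaux j) = 0 := by
  have split : ∀ j ∈ range (k+1),
      (-1:ℝ)^j * (k.choose j) * (((k-j : ℕ) : ℝ) + 1) * (aaux j)
        = (-1:ℝ)^j * ((k.choose j * (k-j) : ℕ) : ℝ) * (aaux j)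
          + (-1:ℝ)^j * (k.choose j) * (aaux j) := by
    intro j _
    push_cast
    ring
  rw [Finset.sum_congr rfl split, Finset.sum_add_distrib, lemA]
  have h1 : ∀ j ∈ range (k+1),
      (-1:ℝ)^j * ((k.choose j * (k-j) : ℕ) : ℝ) * (aaux j)
        = (k:ℝ) * ((-1:ℝ)^j * ((k-1).choose j) * (aaux j)) := by
    intro j _
    rw [choose_absorb k j hk]
    push_cast
    ring
  rw [Finset.sum_congr rfl h1, ← Finset.mul_sum]
  have hk1 : k + 1 = ((k-1) + 1) + 1 := by omega
  rw [hk1, Finset.sum_range_succ]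
  rw [Nat.choose_eq_zero_of_lt (by omega)]
  simp only [Nat.cast_zero, mul_zero, zero_mul, add_zero]
  rw [lemA (k-1)]
  have : (-1:ℝ)^k = -(-1:ℝ)^(k-1) := by
    conv_lhs => rw [show k = (k-1)+1 by omega]
    rw [pow_succ]; ring
  rw [this]
  have hfac : (k:ℝ) * (k-1).factorial = k.factorial := by
    rw [show k = (k-1)+1 by omega]
    push_cast [Nat.factorial_succ]
    ring_nf
  linear_combination ((-1:ℝ)^(k-1)) * hfac

open ArithmeticFunction in
lemma omega_card (m : ℕ) :
    ArithmeticFunction.cardDistinctFactors m = m.primeFactors.card := by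
  rw [ArithmeticFunction.cardDistinctFactors_apply, ← Nat.toFinset_factors,
    List.card_toFinset]

open ArithmeticFunction in
lemma main_formula (g ginv : ArithmeticFunction ℝ)
    (hg : ∀ n : ℕ, 0 < n → g n = (ArithmeticFunction.cardDistinctFactors n : ℝ) + 1)
    (hginv : g * ginv = 1) :
    ∀ n : ℕ, 0 < n → Squarefree n →
      ginv n = (-1:ℝ)^(ArithmeticFunction.cardDistinctFactors n)
        * (aaux (ArithmeticFunction.cardDistinctFactors n) : ℝ) := by
  intro n
  induction n using Nat.strong_induction_on with
  | _ n ih =>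
  intro hn hsf
  have hg1 : g 1 = 1 := by rw [hg 1 one_pos]; simp
  have hgi1 : ginv 1 = 1 := by
    have h := congrArg (fun f => f 1) hginv
    simp only [ArithmeticFunction.mul_apply, Nat.divisorsAntidiagonal_one,
      Finset.sum_singleton, ArithmeticFunction.one_apply, if_pos rfl] at h
    rw [hg1, one_mul] at h
    exact h
  rcases eq_or_lt_of_le (show 1 ≤ n from hn) with h1 | h1
  · rw [← h1, hgi1]
    simp [aaux]
  -- n > 1
  set k := n.primeFactors.card with hk
  have hωn : ArithmeticFunction.cardDistinctFactors n = k := omega_card n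
  have hk1 : 1 ≤ k := Finset.card_pos.2 (Nat.nonempty_primeFactors.2 h1)
  have h0 : (0:ℝ) = ∑ d ∈ n.divisors, g d * ginv (n / d) := by
    have h := congrArg (fun f => f n) hginv
    simp only [ArithmeticFunction.mul_apply, ArithmeticFunction.one_apply] at h
    rw [if_neg (by omega), Nat.sum_divisorsAntidiagonal (fun d e => g d * ginv e)] at h
    exact h.symm
  have hps : ∑ d ∈ n.divisors, g d * ginv (n / d)
      = ∑ t ∈ n.primeFactors.powerset, g t.val.prod * ginv (n / t.val.prod) := by
    rw [← Nat.divisors_filter_squarefree_of_squarefree hsf,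
      Nat.sum_divisors_filter_squarefree hsf.ne_zero, Nat.factors_eq]
    simp [Nat.toFinset_factors]
  -- evaluate each nonempty subset term
  have hterm : ∀ t ∈ n.primeFactors.powerset, t ≠ ∅ →
      g t.val.prod * ginv (n / t.val.prod)
        = ((t.card : ℝ) + 1) * ((-1:ℝ)^(k - t.card) * (aaux (k - t.card) : ℝ)) := by
    intro t htp htne
    rw [Finset.mem_powerset] at htp
    have hprime : ∀ p ∈ t, p.Prime := fun p hp => Nat.prime_of_mem_primeFactors (htp hp)
    have hprodval : t.val.prod = ∏ p ∈ t, p := by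
      rw [Finset.prod_val]; rfl
    have hpf : (∏ p ∈ t, p).primeFactors = t := Nat.primeFactors_prod hprime
    have hdvd : (∏ p ∈ t, p) ∣ n :=
      (Finset.prod_dvd_prod_of_subset t n.primeFactors _ htp).trans (Nat.prod_primeFactors_dvd n)
    have hepos : 0 < ∏ p ∈ t, p := Nat.pos_of_dvd_of_pos hdvd hn
    have hene1 : (∏ p ∈ t, p) ≠ 1 := by
      intro he
      rw [he] at hpf
      simp at hpf
      exact htne hpf.symm
    have hlt : n / (∏ p ∈ t, p) < n := Nat.div_lt_self hn (by omega)
    have hcompl : ∏ p ∈ n.primeFactors \ t, p = n / ∏ p ∈ t, p :=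
      Nat.prod_primeFactors_sdiff_of_squarefree hsf htp
    have hqdvd : n / (∏ p ∈ t, p) ∣ n := Nat.div_dvd_of_dvd hdvd
    have hqpos : 0 < n / (∏ p ∈ t, p) := Nat.div_pos (Nat.le_of_dvd hn hdvd) hepos
    have hqsf : Squarefree (n / (∏ p ∈ t, p)) := hsf.squarefree_of_dvd hqdvd
    have hωq : ArithmeticFunction.cardDistinctFactors (n / (∏ p ∈ t, p)) = k - t.card := by
      rw [omega_card, ← hcompl,
        Nat.primeFactors_prod (fun p hp => Nat.prime_of_mem_primeFactors (Finset.mem_sdiff.1 hp).1),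
        Finset.card_sdiff_of_subset htp]
    have hge : g (∏ p ∈ t, p) = (t.card : ℝ) + 1 := by
      rw [hg _ hepos, omega_card, hpf]
    have hgiq := ih _ hlt hqpos hqsf
    rw [hωq] at hgiq
    rw [hprodval, hge, hgiq]
  have hempty : g ((∅ : Finset ℕ).val.prod) * ginv (n / (∅ : Finset ℕ).val.prod) = ginv n := by
    simp [hg1]
  -- split off the empty set
  rw [hps, ← Finset.add_sum_erase _ _ (Finset.empty_mem_powerset n.primeFactors), hempty] at h0
  have hrest : ∑ t ∈ (n.primeFactors.powerset).erase ∅,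
      g t.val.prod * ginv (n / t.val.prod)
      = (∑ t ∈ n.primeFactors.powerset,
          ((t.card : ℝ) + 1) * ((-1:ℝ)^(k - t.card) * (aaux (k - t.card) : ℝ)))
        - ((0:ℝ) + 1) * ((-1:ℝ)^(k - 0) * (aaux (k - 0) : ℝ)) := by
    rw [Finset.sum_congr rfl (fun t ht => hterm t (Finset.mem_of_mem_erase ht)
      (Finset.ne_of_mem_erase ht))]
    rw [Finset.sum_erase_eq_sub (Finset.empty_mem_powerset n.primeFactors)]
    simp
  have hsum0 : ∑ t ∈ n.primeFactors.powerset,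
      ((t.card : ℝ) + 1) * ((-1:ℝ)^(k - t.card) * (aaux (k - t.card) : ℝ)) = 0 := by
    rw [Finset.sum_powerset_apply_card
      (fun j => ((j : ℝ) + 1) * ((-1:ℝ)^(k - j) * (aaux (k - j) : ℝ)))]
    simp only [nsmul_eq_mul, ← hk]
    have hrefl := Finset.sum_range_reflect
      (fun j => (k.choose j : ℝ) * (((j : ℝ) + 1) * ((-1:ℝ)^(k - j) * (aaux (k - j) : ℝ)))) (k+1)
    rw [← hrefl]
    have hcongr : ∀ j ∈ Finset.range (k+1),
        (k.choose (k + 1 - 1 - j) : ℝ) * (((((k + 1 - 1 - j) : ℕ) : ℝ) + 1)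
          * ((-1:ℝ)^(k - (k + 1 - 1 - j)) * (aaux (k - (k + 1 - 1 - j)) : ℝ)))
        = (-1:ℝ)^j * (k.choose j) * (((k - j : ℕ) : ℝ) + 1) * (aaux j : ℝ) := by
      intro j hj
      rw [Finset.mem_range, Nat.lt_succ_iff] at hj
      have e1 : k + 1 - 1 - j = k - j := by omega
      have e2 : k - (k - j) = j := by omega
      have e3 : k.choose (k - j) = k.choose j := Nat.choose_symm hj
      rw [e1, e2, e3]
      ring
    rw [Finset.sum_congr rfl hcongr]
    exact lemB k hk1
  rw [hrest, hsum0] at h0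
  rw [hωn]
  rw [Nat.sub_zero] at h0
  linarith [h0]

/-- Let `g` be the arithmetic function with `g(n) = ω(n) + 1` for `n ≥ 1`
and let `ginv` be its Dirichlet inverse (characterized by `g * ginv = 1`).  Then for every
squarefree positive integer `n`,
`|ginv(n)| = ∑_{m=0}^{ω(n)} C(ω(n), m) · m!`. -/
theorem stmt_6 (g ginv : ArithmeticFunction ℝ)
    (hg : ∀ n : ℕ, 0 < n → g n = (ArithmeticFunction.cardDistinctFactors n : ℝ) + 1)
    (hginv : g * ginv = 1) (n : ℕ) (hn : 0 < n) (hsf : Squarefree n) :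
    |ginv n| =
      ∑ m ∈ Finset.range (ArithmeticFunction.cardDistinctFactors n + 1),
        (((ArithmeticFunction.cardDistinctFactors n).choose m * m.factorial : ℕ) : ℝ) := by
  have h := main_formula g ginv hg hginv n hn hsf
  rw [h, abs_mul, abs_pow, abs_neg, abs_one, one_pow, one_mul,
    abs_of_nonneg (Nat.cast_nonneg _)]
  unfold aaux
  push_cast
  rfl
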